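/- For every involution π ∈ S_n, nest(π) = ⌊height(λ)/2⌋, where λ is the Robinson–Schensted shape of π and height(λ) is the number of rows of λ. -/

import Mathlib

/-- `π` has a decreasing subsequence of length `t`:
positions `p 0 < p 1 < ⋯` with strictly decreasing values. -/
def HasDecSubseq {n : ℕ} (π : Equiv.Perm (Fin n)) (t : ℕ) : Prop :=
  ∃ p : Fin t → Fin n, StrictMono p ∧ StrictAnti (fun s => π (p s))

/-- The length of the longest decreasing subsequence of `π`. -/
noncomputable def decLen {n : ℕ} (π : Equiv.Perm (Fin n)) : ℕ :=
  sSup {t | HasDecSubseq π t}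

/-- `π` has a nesting of size `r`: positions `i₁ < ⋯ < i_r < j_r < ⋯ < j₁`
with `π i_t = j_t` for all `t`. -/
def HasNesting {n : ℕ} (π : Equiv.Perm (Fin n)) (r : ℕ) : Prop :=
  ∃ f : Fin r → Fin n, StrictMono f ∧ StrictAnti (fun t => π (f t)) ∧ ∀ t, f t < π (f t)

/-- The nesting number of `π`. -/
noncomputable def nestP {n : ℕ} (π : Equiv.Perm (Fin n)) : ℕ :=
  sSup {r | HasNesting π r}

/-- `π` has a crossing of size `r`: matched pairs `{i_t, j_t}` with
`i₁ < ⋯ < i_r < j₁ < ⋯ < j_r`. -/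
def HasCrossing {n : ℕ} (π : Equiv.Perm (Fin n)) (r : ℕ) : Prop :=
  ∃ f : Fin r → Fin n, StrictMono f ∧ StrictMono (fun t => π (f t)) ∧
    ∀ s t : Fin r, f s < π (f t)

/-- The crossing number of `π`. -/
noncomputable def crnP {n : ℕ} (π : Equiv.Perm (Fin n)) : ℕ :=
  sSup {r | HasCrossing π r}

/-- The descent set of `π` (positions `0`-indexed): `i` with `π i > π (i+1)`. -/
def DesP {n : ℕ} (π : Equiv.Perm (Fin n)) : Set ℕ :=
  {i | ∃ h : i + 1 < n, π ⟨i + 1, h⟩ < π ⟨i, Nat.lt_of_succ_lt h⟩}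

/-- The arcs `{a, π a}` and `{b, π b}` (drawn above a line) intersect. -/
def ArcCross {n : ℕ} (π : Equiv.Perm (Fin n)) (a b : Fin n) : Prop :=
  (min a (π a) < min b (π b) ∧ min b (π b) < max a (π a) ∧ max a (π a) < max b (π b)) ∨
  (min b (π b) < min a (π a) ∧ min a (π a) < max b (π b) ∧ max b (π b) < max a (π a))

/-- The geometric descent set of the (partial) matching corresponding to the
involution `π`: `i` such that `{i, i+1}` is a matched pair, or the arcs of `i`
and `i+1` intersect, or `i` is unmatched while `i+1` is matched. -/
def MDesP {n : ℕ} (π : Equiv.Perm (Fin n)) : Set ℕ :=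
  {i | ∃ h : i + 1 < n,
    (π ⟨i, Nat.lt_of_succ_lt h⟩ = ⟨i + 1, h⟩) ∨
    (π ⟨i, Nat.lt_of_succ_lt h⟩ ≠ ⟨i, Nat.lt_of_succ_lt h⟩ ∧ π ⟨i + 1, h⟩ ≠ ⟨i + 1, h⟩ ∧
      ArcCross π ⟨i, Nat.lt_of_succ_lt h⟩ ⟨i + 1, h⟩) ∨
    (π ⟨i, Nat.lt_of_succ_lt h⟩ = ⟨i, Nat.lt_of_succ_lt h⟩ ∧ π ⟨i + 1, h⟩ ≠ ⟨i + 1, h⟩)}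

/-- Row-insert the letter `x` into the row `r`: replace the first entry larger
than `x` (returning the bumped entry), or append `x` at the end. -/
def bumpRow (x : ℕ) (r : List ℕ) : List ℕ × Option ℕ :=
  match r.findIdx? (fun y => decide (x < y)) with
  | none => (r ++ [x], none)
  | some i => (r.set i x, r[i]?)

/-- Robinson–Schensted row insertion of a letter into a tableau
(given as its list of rows). -/
def RSInsert : List (List ℕ) → ℕ → List (List ℕ)
  | [], x => [[x]]
  | r :: rs, x =>
    match bumpRow x r with
    | (r', none) => r' :: rs
    | (r', some y) => r' :: RSInsert rs y

/-- The Robinson–Schensted insertion tableau of a word. -/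
def Ptab (w : List ℕ) : List (List ℕ) := w.foldl RSInsert []

/-- The one-line notation of `π ∈ S_n` as a word on the letters `0,…,n-1`. -/
def oneLine {n : ℕ} (π : Equiv.Perm (Fin n)) : List ℕ :=
  (List.finRange n).map fun i => ((π i : Fin n) : ℕ)

/-- The length of column `j` of the shape with row lengths `sh`. -/
def colLen (sh : List ℕ) (j : ℕ) : ℕ := (sh.filter fun r => decide (j < r)).length

/-- The number of columns of odd length of the shape with row lengths `sh`. -/
def oddcol (sh : List ℕ) : ℕ :=
  ((List.range (sh.foldr max 0)).filter fun j => decide (Odd (colLen sh j))).length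

/-- The entry of the tableau `T` in row `r`, column `c` (if any). -/
def entry (T : List (List ℕ)) (r c : ℕ) : Option ℕ := (T[r]?).bind fun row => row[c]?


open List

section NestDec

open Finset in


lemma hasDec_zero {n : ℕ} (π : Equiv.Perm (Fin n)) : HasDecSubseq π 0 :=
  ⟨fun s => s.elim0, fun s => s.elim0, fun s => s.elim0⟩

lemma hasDec_le {n : ℕ} {π : Equiv.Perm (Fin n)} {t : ℕ} (h : HasDecSubseq π t) : t ≤ n := by
  obtain ⟨p, hp, -⟩ := h
  simpa using Fintype.card_le_of_injective p hp.injective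

lemma hasNest_le {n : ℕ} {π : Equiv.Perm (Fin n)} {r : ℕ} (h : HasNesting π r) : r ≤ n := by
  obtain ⟨f, hf, -, -⟩ := h
  simpa using Fintype.card_le_of_injective f hf.injective

lemma hasNest_mono {n : ℕ} {π : Equiv.Perm (Fin n)} {r k : ℕ} (h : HasNesting π r)
    (hk : k ≤ r) : HasNesting π k := by
  obtain ⟨f, hf, ha, hl⟩ := h
  exact ⟨fun i => f (Fin.castLE hk i), fun i j hij => hf hij, fun i j hij => ha hij,
    fun i => hl _⟩

lemma nest_to_dec {n : ℕ} {π : Equiv.Perm (Fin n)} (hπ : Function.Involutive ⇑π) {r : ℕ}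
    (h : HasNesting π r) : HasDecSubseq π (2 * r) := by
  obtain ⟨f, hf, ha, hl⟩ := h
  rcases Nat.eq_zero_or_pos r with rfl | hr
  · simpa using hasDec_zero π
  have idx : ∀ s : Fin (2 * r), ¬ (s : ℕ) < r → 2 * r - 1 - (s : ℕ) < r := by
    intro s hs; have := s.isLt; omega
  have key : ∀ (a b : Fin r), f a < π (f b) := by
    intro a b
    rcases le_total a b with hab | hab
    · exact lt_of_le_of_lt (hf.monotone hab) (hl b)
    · exact lt_of_lt_of_le (hl a) (ha.antitone hab)
  refine ⟨fun s => if hlt : (s : ℕ) < r then f ⟨s, hlt⟩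
      else π (f ⟨2 * r - 1 - s, idx s hlt⟩), ?_, ?_⟩
  · intro s s' hss'
    have hss : (s : ℕ) < (s' : ℕ) := hss'
    dsimp only
    by_cases h1 : (s : ℕ) < r <;> by_cases h2 : (s' : ℕ) < r
    · rw [dif_pos h1, dif_pos h2]
      exact hf (show (s : ℕ) < (s' : ℕ) from hss)
    · rw [dif_pos h1, dif_neg h2]; exact key _ _
    · omega
    · rw [dif_neg h1, dif_neg h2]
      have hlt : 2 * r - 1 - (s' : ℕ) < 2 * r - 1 - (s : ℕ) := by have := s'.isLt; omega
      exact ha hlt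
  · intro s s' hss'
    have hss : (s : ℕ) < (s' : ℕ) := hss'
    dsimp only
    by_cases h1 : (s : ℕ) < r <;> by_cases h2 : (s' : ℕ) < r
    · rw [dif_pos h1, dif_pos h2]
      exact ha (show (s : ℕ) < (s' : ℕ) from hss)
    · rw [dif_pos h1, dif_neg h2, hπ _]; exact key _ _
    · omega
    · rw [dif_neg h1, dif_neg h2, hπ _, hπ _]
      have hlt : 2 * r - 1 - (s' : ℕ) < 2 * r - 1 - (s : ℕ) := by have := s'.isLt; omega
      exact hf hlt

lemma dec_to_nest {n : ℕ} {π : Equiv.Perm (Fin n)} (hπ : Function.Involutive ⇑π) {t : ℕ}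
    (h : HasDecSubseq π t) : HasNesting π (t / 2) := by
  obtain ⟨p, hp, hq⟩ := h
  classical
  have hq' : StrictAnti (fun s => π (p s)) := hq
  set A : Finset (Fin t) := Finset.univ.filter (fun s => p s < π (p s)) with hA
  set B : Finset (Fin t) := Finset.univ.filter (fun s => π (p s) < p s) with hB
  set F : Finset (Fin t) := Finset.univ.filter (fun s => p s = π (p s)) with hF
  have memA : ∀ {s}, s ∈ A ↔ p s < π (p s) := by intro s; rw [hA, Finset.mem_filter]; simp
  have memB : ∀ {s}, s ∈ B ↔ π (p s) < p s := by intro s; rw [hB, Finset.mem_filter]; simp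
  have memF : ∀ {s}, s ∈ F ↔ p s = π (p s) := by intro s; rw [hF, Finset.mem_filter]; simp
  have hFcard : F.card ≤ 1 := by
    refine Finset.card_le_one.2 ?_
    intro a ha b hb
    by_contra hne
    rw [memF] at ha hb
    rcases lt_trichotomy a b with hab | hab | hab
    · have h1 : p a < p b := hp hab
      have h2 : π (p b) < π (p a) := hq' hab
      rw [← ha, ← hb] at h2; exact absurd h1 (not_lt.2 h2.le)
    · exact hne hab
    · have h1 : p b < p a := hp hab
      have h2 : π (p a) < π (p b) := hq' hab
      rw [← ha, ← hb] at h2; exact absurd h1 (not_lt.2 h2.le)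
  have hcover : (Finset.univ : Finset (Fin t)) ⊆ A ∪ B ∪ F := by
    intro s _
    rcases lt_trichotomy (p s) (π (p s)) with hs | hs | hs
    · exact Finset.mem_union_left _ (Finset.mem_union_left _ (memA.2 hs))
    · exact Finset.mem_union_right _ (memF.2 hs)
    · exact Finset.mem_union_left _ (Finset.mem_union_right _ (memB.2 hs))
  have hcards : t ≤ A.card + B.card + 1 := by
    have h1 : (Finset.univ : Finset (Fin t)).card ≤ (A ∪ B ∪ F).card :=
      Finset.card_le_card hcover
    have h2 : (A ∪ B ∪ F).card ≤ A.card + B.card + F.card :=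
      le_trans (Finset.card_union_le _ _) (by
        have := Finset.card_union_le A B; omega)
    simp only [Finset.card_univ, Fintype.card_fin] at h1
    omega
  have buildA : HasNesting π A.card := by
    have e := A.orderIsoOfFin (rfl : A.card = A.card)
    refine ⟨fun i => p (e i), ?_, ?_, ?_⟩
    · intro i j hij
      exact hp (by exact_mod_cast (e.strictMono hij))
    · intro i j hij
      exact hq' (by exact_mod_cast (e.strictMono hij))
    · intro i
      exact memA.1 (e i).2
  have buildB : HasNesting π B.card := by
    have e := B.orderIsoOfFin (rfl : B.card = B.card)
    refine ⟨fun i => π (p (e i.rev)), ?_, ?_, ?_⟩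
    · intro i j hij
      have hrev : (e j.rev : Fin t) < (e i.rev) := by
        exact_mod_cast e.strictMono (Fin.rev_lt_rev.2 hij)
      exact hq' hrev
    · intro i j hij
      show π (π (p _)) < π (π (p _))
      rw [hπ _, hπ _]
      have hrev : (e j.rev : Fin t) < (e i.rev) := by
        exact_mod_cast e.strictMono (Fin.rev_lt_rev.2 hij)
      exact hp hrev
    · intro i
      show π (p _) < π (π (p _))
      rw [hπ _]
      exact memB.1 (e i.rev).2
  rcases le_total A.card B.card with hc | hc
  · exact hasNest_mono buildB (by omega)
  · exact hasNest_mono buildA (by omega)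


end NestDec

def DecList (w : List ℕ) (t : ℕ) : Prop :=
  ∃ l : List ℕ, l.Sublist w ∧ l.Pairwise (· > ·) ∧ l.length = t

def KStep (u v : List ℕ) : Prop :=
  ∃ (a b : List ℕ) (x y z : ℕ),
    (x < y ∧ y ≤ z ∧ u = a ++ y :: x :: z :: b ∧ v = a ++ y :: z :: x :: b) ∨
    (x ≤ y ∧ y < z ∧ u = a ++ x :: z :: y :: b ∧ v = a ++ z :: x :: y :: b)

def Keq : List ℕ → List ℕ → Prop := Relation.ReflTransGen (fun u v => KStep u v ∨ KStep v u)

lemma Keq.refl (l : List ℕ) : Keq l l := Relation.ReflTransGen.refl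

lemma Keq.trans {u v w : List ℕ} (h1 : Keq u v) (h2 : Keq v w) : Keq u w :=
  Relation.ReflTransGen.trans h1 h2

lemma Keq.symm {u v : List ℕ} (h : Keq u v) : Keq v u :=
  @Std.Symm.symm _ _ (@Relation.ReflTransGen.stdSymm _ _ ⟨fun _ _ hh => hh.symm⟩) _ _ h

lemma Keq.of_step {u v : List ℕ} (h : KStep u v) : Keq u v :=
  Relation.ReflTransGen.single (Or.inl h)

lemma KStep.append_left {u v : List ℕ} (c : List ℕ) (h : KStep u v) : KStep (c ++ u) (c ++ v) := by
  obtain ⟨a, b, x, y, z, hc⟩ := h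
  refine ⟨c ++ a, b, x, y, z, ?_⟩
  rcases hc with ⟨h1, h2, rfl, rfl⟩ | ⟨h1, h2, rfl, rfl⟩
  · exact Or.inl ⟨h1, h2, by simp, by simp⟩
  · exact Or.inr ⟨h1, h2, by simp, by simp⟩

lemma KStep.append_right {u v : List ℕ} (c : List ℕ) (h : KStep u v) : KStep (u ++ c) (v ++ c) := by
  obtain ⟨a, b, x, y, z, hc⟩ := h
  refine ⟨a, b ++ c, x, y, z, ?_⟩
  rcases hc with ⟨h1, h2, rfl, rfl⟩ | ⟨h1, h2, rfl, rfl⟩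
  · exact Or.inl ⟨h1, h2, by simp, by simp⟩
  · exact Or.inr ⟨h1, h2, by simp, by simp⟩

lemma Keq.append_left {u v : List ℕ} (c : List ℕ) (h : Keq u v) : Keq (c ++ u) (c ++ v) :=
  Relation.ReflTransGen.lift (c ++ ·)
    (fun _ _ hh => hh.imp (KStep.append_left c) (KStep.append_left c)) _ _ h

lemma Keq.append_right {u v : List ℕ} (c : List ℕ) (h : Keq u v) : Keq (u ++ c) (v ++ c) :=
  Relation.ReflTransGen.lift (· ++ c)
    (fun _ _ hh => hh.imp (KStep.append_right c) (KStep.append_right c)) _ _ h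

lemma Keq.cons {u v : List ℕ} (c : ℕ) (h : Keq u v) : Keq (c :: u) (c :: v) :=
  Keq.append_left [c] h

lemma sublist3 {l : List ℕ} {p q r : ℕ} (h : l <+ [p, q, r]) :
    l = [] ∨ l = [p] ∨ l = [q] ∨ l = [r] ∨ l = [p, q] ∨ l = [p, r] ∨ l = [q, r] ∨
      l = [p, q, r] := by
  rcases List.sublist_cons_iff.1 h with h1 | ⟨l1, rfl, h1⟩ <;>
  [rcases List.sublist_cons_iff.1 h1 with h2 | ⟨l2, rfl, h2⟩;
   rcases List.sublist_cons_iff.1 h1 with h2 | ⟨l2, rfl, h2⟩] <;>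
  [rcases List.sublist_cons_iff.1 h2 with h3 | ⟨l3, rfl, h3⟩;
   rcases List.sublist_cons_iff.1 h2 with h3 | ⟨l3, rfl, h3⟩;
   rcases List.sublist_cons_iff.1 h2 with h3 | ⟨l3, rfl, h3⟩;
   rcases List.sublist_cons_iff.1 h2 with h3 | ⟨l3, rfl, h3⟩] <;>
  simp_all [List.sublist_nil]

lemma declist_transfer {a b m m' : List ℕ}
    (H : ∀ lm : List ℕ, lm <+ m → lm.Pairwise (· > ·) →
      ∃ lm', lm' <+ m' ∧ lm'.Pairwise (· > ·) ∧ lm'.length = lm.length ∧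
        (∀ e ∈ lm', ∃ e₀ ∈ lm, e ≤ e₀) ∧ (∀ e ∈ lm', ∃ e₀ ∈ lm, e₀ ≤ e)) :
    ∀ t, DecList (a ++ (m ++ b)) t → DecList (a ++ (m' ++ b)) t := by
  rintro t ⟨l, hsub, hsort, rfl⟩
  obtain ⟨la, l2, rfl, hla, hl2⟩ := List.sublist_append_iff.1 hsub
  obtain ⟨lm, lb, rfl, hlm, hlb⟩ := List.sublist_append_iff.1 hl2
  have hsort' : List.Pairwise (· > ·) (la ++ (lm ++ lb)) := hsort
  rw [List.pairwise_append] at hsort'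
  obtain ⟨pwa, pw2, crossA⟩ := hsort'
  rw [List.pairwise_append] at pw2
  obtain ⟨pwm, pwb, crossMB⟩ := pw2
  obtain ⟨lm', hm'sub, hm'sort, hm'len, hub, hlbnd⟩ := H lm hlm pwm
  refine ⟨la ++ (lm' ++ lb), ?_, ?_, ?_⟩
  · exact List.Sublist.append hla (List.Sublist.append hm'sub hlb)
  · refine List.pairwise_append.2 ⟨pwa, ?_, ?_⟩
    · refine List.pairwise_append.2 ⟨hm'sort, pwb, ?_⟩
      intro e he f hf
      obtain ⟨e₀, he₀, he₀e⟩ := hlbnd e he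
      exact lt_of_lt_of_le (crossMB e₀ he₀ f hf) he₀e
    · intro w hw e he
      rcases List.mem_append.1 he with he | he
      · obtain ⟨e₀, he₀, hee₀⟩ := hub e he
        exact lt_of_le_of_lt hee₀ (crossA w hw e₀ (List.mem_append.2 (Or.inl he₀)))
      · exact crossA w hw e (List.mem_append.2 (Or.inr he))
  · simp [hm'len]

lemma kstep_declist {u v : List ℕ} (h : KStep u v) (t : ℕ) : DecList u t ↔ DecList v t := by
  obtain ⟨a, b, x, y, z, hc⟩ := h
  rcases hc with ⟨hxy, hyz, rfl, rfl⟩ | ⟨hxy, hyz, rfl, rfl⟩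
  · show DecList (a ++ ([y,x,z] ++ b)) t ↔ DecList (a ++ ([y,z,x] ++ b)) t
    constructor
    · apply declist_transfer
      intro lm hsub hsort
      rcases sublist3 hsub with rfl | rfl | rfl | rfl | rfl | rfl | rfl | rfl
      · exact ⟨[], by simp, by simp, rfl, by simp, by simp⟩
      · exact ⟨[y], by simp, by simp, rfl, by simp, by simp⟩
      · exact ⟨[x], by simp, by simp, rfl, by simp, by simp⟩
      · exact ⟨[z], by simp, by simp, rfl, by simp, by simp⟩
      · exact ⟨[y, x], by simp [List.cons_sublist_cons, List.singleton_sublist], hsort, rfl,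
          by simp, by simp⟩
      · exfalso; simp [List.pairwise_cons] at hsort; omega
      · exfalso; simp [List.pairwise_cons] at hsort; omega
      · exfalso; simp [List.pairwise_cons] at hsort; omega
    · apply declist_transfer
      intro lm hsub hsort
      rcases sublist3 hsub with rfl | rfl | rfl | rfl | rfl | rfl | rfl | rfl
      · exact ⟨[], by simp, by simp, rfl, by simp, by simp⟩
      · exact ⟨[y], by simp, by simp, rfl, by simp, by simp⟩
      · exact ⟨[z], by simp, by simp, rfl, by simp, by simp⟩
      · exact ⟨[x], by simp, by simp, rfl, by simp, by simp⟩
      · exfalso; simp [List.pairwise_cons] at hsort; omega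
      · exact ⟨[y, x], by simp [List.cons_sublist_cons, List.singleton_sublist], hsort, rfl,
          by simp, by simp⟩
      · refine ⟨[y, x], by simp [List.cons_sublist_cons, List.singleton_sublist],
          by simp [List.pairwise_cons]; omega, rfl, by simp; omega, by simp; omega⟩
      · exfalso; simp [List.pairwise_cons] at hsort; omega
  · show DecList (a ++ ([x,z,y] ++ b)) t ↔ DecList (a ++ ([z,x,y] ++ b)) t
    constructor
    · apply declist_transfer
      intro lm hsub hsort
      rcases sublist3 hsub with rfl | rfl | rfl | rfl | rfl | rfl | rfl | rfl
      · exact ⟨[], by simp, by simp, rfl, by simp, by simp⟩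
      · exact ⟨[x], by simp, by simp, rfl, by simp, by simp⟩
      · exact ⟨[z], by simp, by simp, rfl, by simp, by simp⟩
      · exact ⟨[y], by simp, by simp, rfl, by simp, by simp⟩
      · exfalso; simp [List.pairwise_cons] at hsort; omega
      · exfalso; simp [List.pairwise_cons] at hsort; omega
      · exact ⟨[z, y], by simp [List.cons_sublist_cons, List.singleton_sublist], hsort, rfl,
          by simp, by simp⟩
      · exfalso; simp [List.pairwise_cons] at hsort; omega
    · apply declist_transfer
      intro lm hsub hsort
      rcases sublist3 hsub with rfl | rfl | rfl | rfl | rfl | rfl | rfl | rfl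
      · exact ⟨[], by simp, by simp, rfl, by simp, by simp⟩
      · exact ⟨[z], by simp, by simp, rfl, by simp, by simp⟩
      · exact ⟨[x], by simp, by simp, rfl, by simp, by simp⟩
      · exact ⟨[y], by simp, by simp, rfl, by simp, by simp⟩
      · refine ⟨[z, y], by simp [List.cons_sublist_cons, List.singleton_sublist],
          by simp [List.pairwise_cons]; omega, rfl, by simp; omega, by simp; omega⟩
      · exact ⟨[z, y], by simp [List.cons_sublist_cons, List.singleton_sublist], hsort, rfl,
          by simp, by simp⟩
      · exfalso; simp [List.pairwise_cons] at hsort; omega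
      · exfalso; simp [List.pairwise_cons] at hsort; omega

lemma keq_declist {u v : List ℕ} (h : Keq u v) (t : ℕ) : DecList u t ↔ DecList v t := by
  induction h with
  | refl => exact Iff.rfl
  | tail h1 h2 ih =>
    rcases h2 with h2 | h2
    · exact ih.trans (kstep_declist h2 t)
    · exact ih.trans (kstep_declist h2 t).symm


def Rows (T : List (List ℕ)) : Prop := ∀ r ∈ T, r ≠ [] ∧ r.Pairwise (· ≤ ·)

def readT (T : List (List ℕ)) : List ℕ := T.reverse.flatten

lemma bumpRow_nil (x : ℕ) : bumpRow x [] = ([x], none) := rfl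

lemma bumpRow_cons (x a : ℕ) (r : List ℕ) :
    bumpRow x (a :: r) = if x < a then (x :: r, some a)
      else ((a :: (bumpRow x r).1), (bumpRow x r).2) := by
  by_cases h : x < a
  · simp [bumpRow, List.findIdx?_cons, h]
  · simp only [bumpRow, List.findIdx?_cons, decide_eq_true_eq, h, decide_false, if_neg,
      ite_false]
    cases hf : List.findIdx? (fun y => decide (x < y)) r with
    | none => simp
    | some i => simp

lemma bump_none (x : ℕ) : ∀ (r : List ℕ), (bumpRow x r).2 = none →
    (bumpRow x r).1 = r ++ [x] ∧ ∀ z ∈ r, z ≤ x := by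
  intro r
  induction r with
  | nil => simp [bumpRow_nil]
  | cons a r ih =>
    rw [bumpRow_cons]
    by_cases h : x < a
    · simp [h]
    · simp only [if_neg h]
      intro h2
      obtain ⟨h1, h3⟩ := ih h2
      refine ⟨by simp [h1], ?_⟩
      intro z hz
      rcases List.mem_cons.1 hz with rfl | hz
      · exact le_of_not_gt h
      · exact h3 z hz

lemma keq_slide (x : ℕ) : ∀ (r : List ℕ), r.Pairwise (· ≤ ·) → ∀ a, x < a → (∀ z ∈ r, a ≤ z) →
    Keq (a :: x :: r) (a :: r ++ [x]) := by
  intro r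
  induction r with
  | nil => intro _ a _ _; exact Keq.refl _
  | cons b r ih =>
    intro hs a hxa hab
    have hab' : a ≤ b := hab b (by simp)
    have step1 : KStep (a :: x :: b :: r) (a :: b :: x :: r) := by
      refine ⟨[], r, x, a, b, Or.inl ⟨hxa, hab', by simp, by simp⟩⟩
    have hs' : r.Pairwise (· ≤ ·) := (List.pairwise_cons.1 hs).2
    have hbz : ∀ z ∈ r, b ≤ z := (List.pairwise_cons.1 hs).1
    have step2 : Keq (b :: x :: r) (b :: r ++ [x]) :=
      ih hs' b (lt_of_lt_of_le hxa hab') hbz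
    exact Keq.trans (Keq.of_step step1) (Keq.cons a step2)

lemma bump_some (x : ℕ) : ∀ (r r' : List ℕ) (y : ℕ), r.Pairwise (· ≤ ·) →
    bumpRow x r = (r', some y) →
    x < y ∧ r' ≠ [] ∧ r'.Pairwise (· ≤ ·) ∧ r'.headI ≤ x ∧ r'.headI ≤ r.headI ∧ r'.headI < y ∧
      (r'.headI = x ∨ r'.headI = r.headI) ∧
      (∀ z ∈ r', z = x ∨ z ∈ r) ∧ Keq (y :: r') (r ++ [x]) := by
  intro r
  induction r with
  | nil => intro r' y _ h; simp [bumpRow_nil] at h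
  | cons a r ih =>
    intro r' y hs h
    rw [bumpRow_cons] at h
    have hs' : r.Pairwise (· ≤ ·) := (List.pairwise_cons.1 hs).2
    have haz : ∀ z ∈ r, a ≤ z := (List.pairwise_cons.1 hs).1
    by_cases hxa : x < a
    · rw [if_pos hxa] at h
      obtain ⟨rfl, rfl⟩ : x :: r = r' ∧ a = y := by
        constructor <;> [exact congrArg Prod.fst h; exact Option.some_injective _ (congrArg Prod.snd h)]
      refine ⟨hxa, by simp, ?_, by simp, by simp [hxa.le], by simp [hxa], Or.inl (by simp), ?_, ?_⟩
      · exact List.pairwise_cons.2 ⟨fun z hz => le_of_lt (lt_of_lt_of_le hxa (haz z hz)), hs'⟩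
      · intro z hz; rcases List.mem_cons.1 hz with rfl | hz
        · exact Or.inl rfl
        · exact Or.inr (by simp [hz])
      · exact keq_slide x r hs' a hxa haz
    · rw [if_neg hxa] at h
      have hax : a ≤ x := le_of_not_gt hxa
      obtain ⟨hr1, hr2⟩ : a :: (bumpRow x r).1 = r' ∧ (bumpRow x r).2 = some y := by
        constructor <;> [exact congrArg Prod.fst h; exact congrArg Prod.snd h]
      obtain ⟨rr', hbump⟩ : ∃ rr', bumpRow x r = (rr', some y) :=
        ⟨(bumpRow x r).1, by rw [← hr2]⟩
      obtain ⟨hxy, hne, hsort, hh1, hh2, hh3, -, hmem, hkeq⟩ := ih rr' y hs' hbump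
      have hrr : (bumpRow x r).1 = rr' := by rw [hbump]
      subst hr1
      rw [hrr]
      have harr : ∀ z ∈ rr', a ≤ z := by
        intro z hz
        rcases hmem z hz with rfl | hz
        · exact hax
        · exact haz z hz
      refine ⟨hxy, by simp, ?_, by simpa using hax, by simp, ?_, Or.inr (by simp), ?_, ?_⟩
      · exact List.pairwise_cons.2 ⟨harr, hsort⟩
      · simpa using lt_of_le_of_lt hax hxy
      · intro z hz; rcases List.mem_cons.1 hz with rfl | hz
        · exact Or.inr (by simp)
        · rcases hmem z hz with rfl | hz'
          · exact Or.inl rfl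
          · exact Or.inr (by simp [hz'])
      · -- Keq (y :: a :: rr') ((a :: r) ++ [x])
        obtain ⟨c, rest, rfl⟩ : ∃ c rest, rr' = c :: rest := by
          cases rr' with
          | nil => exact absurd rfl hne
          | cons c rest => exact ⟨c, rest, rfl⟩
        have hac : a ≤ c := harr c (by simp)
        have hcy : c < y := by simpa using hh3
        have swap : KStep (a :: y :: c :: rest) (y :: a :: c :: rest) :=
          ⟨[], rest, a, c, y, Or.inr ⟨hac, hcy, by simp, by simp⟩⟩
        refine Keq.trans (Keq.symm (Keq.of_step swap)) ?_
        show Keq (a :: y :: c :: rest) ((a :: r) ++ [x])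
        have : Keq (a :: (y :: c :: rest)) (a :: (r ++ [x])) := Keq.cons a hkeq
        simpa using this

lemma headI_append {r : List ℕ} (h : r ≠ []) (s : List ℕ) : (r ++ s).headI = r.headI := by
  cases r with
  | nil => exact absurd rfl h
  | cons a r => rfl

lemma rsinsert_main (x : ℕ) : ∀ (T : List (List ℕ)), Rows T →
    (T.map List.headI).IsChain (· < ·) →
    Rows (RSInsert T x) ∧ ((RSInsert T x).map List.headI).IsChain (· < ·) ∧
      RSInsert T x ≠ [] ∧
      ((RSInsert T x).headI.headI = x ∨ (T ≠ [] ∧ (RSInsert T x).headI.headI = T.headI.headI)) ∧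
      Keq (readT (RSInsert T x)) (readT T ++ [x]) := by
  intro T
  induction T generalizing x with
  | nil =>
    intro _ _
    refine ⟨?_, by simp [RSInsert], by simp [RSInsert], Or.inl (by simp [RSInsert]), ?_⟩
    · intro r hr
      simp only [RSInsert, List.mem_singleton] at hr
      subst hr; exact ⟨by simp, by simp⟩
    · simp [RSInsert, readT]
      exact Keq.refl _
  | cons r rs ih =>
    intro hR hC
    have hrne : r ≠ [] := (hR r (by simp)).1
    have hrs : r.Pairwise (· ≤ ·) := (hR r (by simp)).2
    have hRrs : Rows rs := fun q hq => hR q (by simp [hq])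
    have hCrs : (rs.map List.headI).IsChain (· < ·) := (List.isChain_cons.1 (by simpa using hC)).2
    cases hbo : (bumpRow x r).2 with
    | none =>
      have heq : RSInsert (r :: rs) x = (r ++ [x]) :: rs := by
        simp only [RSInsert]
        rcases hb : bumpRow x r with ⟨r', o⟩
        rw [hb] at hbo; cases hbo
        obtain ⟨h1, -⟩ := bump_none x r (by rw [hb])
        rw [hb] at h1; simp at h1; rw [h1]
      obtain ⟨-, hle⟩ := bump_none x r hbo
      rw [heq]
      have hsx : (r ++ [x]).Pairwise (· ≤ ·) := by
        refine List.pairwise_append.2 ⟨hrs, by simp, ?_⟩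
        intro z hz w hw
        simp at hw; subst hw; exact hle z hz
      have hh : (r ++ [x]).headI = r.headI := headI_append hrne [x]
      refine ⟨?_, ?_, by simp, Or.inr ⟨by simp, by simpa using hh⟩, ?_⟩
      · intro q hq
        rcases List.mem_cons.1 hq with rfl | hq
        · exact ⟨by simp, hsx⟩
        · exact hR q (by simp [hq])
      · simpa [hh] using hC
      · show Keq (((r ++ [x]) :: rs).reverse.flatten) ((r :: rs).reverse.flatten ++ [x])
        simp [List.append_assoc]
        exact Keq.refl _
    | some y =>
      rcases hb : bumpRow x r with ⟨r', o⟩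
      rw [hb] at hbo; subst hbo
      have heq : RSInsert (r :: rs) x = r' :: RSInsert rs y := by
        simp only [RSInsert]; rw [hb]
      obtain ⟨hxy, hne, hsort, hh1, hh2, hh3, hdisj, hmem, hkeq⟩ := bump_some x r r' y hrs hb
      obtain ⟨ihR, ihC, ihne, ihhead, ihkeq⟩ := ih y hRrs hCrs
      rw [heq]
      refine ⟨?_, ?_, by simp, ?_, ?_⟩
      · intro q hq
        rcases List.mem_cons.1 hq with rfl | hq
        · exact ⟨hne, hsort⟩
        · exact ihR q hq
      · refine List.isChain_cons.2 ⟨?_, ihC⟩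
        intro b hbmem
        obtain ⟨L0, Ls, hL⟩ : ∃ L0 Ls, RSInsert rs y = L0 :: Ls := by
          cases hL : RSInsert rs y with
          | nil => exact absurd hL ihne
          | cons L0 Ls => exact ⟨_, _, rfl⟩
        rw [hL] at hbmem
        simp only [List.map_cons, List.head?_cons, Option.mem_some_iff] at hbmem
        subst hbmem
        have : L0.headI = (RSInsert rs y).headI.headI := by rw [hL]; rfl
        rw [this]
        rcases ihhead with hcase | ⟨hrsne, hcase⟩
        · rw [hcase]; exact hh3
        · rw [hcase]
          obtain ⟨q0, qs, rfl⟩ : ∃ q0 qs, rs = q0 :: qs := by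
            cases rs with
            | nil => exact absurd rfl hrsne
            | cons q0 qs => exact ⟨_, _, rfl⟩
          have hlt : r.headI < q0.headI := by
            have := (List.isChain_cons_cons.1 (by simpa using hC)).1
            exact this
          exact lt_of_le_of_lt hh2 (by simpa using hlt)
      · rcases hdisj with hcase | hcase
        · exact Or.inl (by simpa using hcase)
        · exact Or.inr ⟨by simp, by simpa using hcase⟩
      · show Keq ((r' :: RSInsert rs y).reverse.flatten) ((r :: rs).reverse.flatten ++ [x])
        have step1 : Keq ((RSInsert rs y).reverse.flatten ++ r')
            ((rs.reverse.flatten ++ [y]) ++ r') := Keq.append_right r' ihkeq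
        have step2 : Keq (rs.reverse.flatten ++ (y :: r'))
            (rs.reverse.flatten ++ (r ++ [x])) := Keq.append_left _ hkeq
        have e1 : (r' :: RSInsert rs y).reverse.flatten
            = (RSInsert rs y).reverse.flatten ++ r' := by simp
        have e2 : (rs.reverse.flatten ++ [y]) ++ r' = rs.reverse.flatten ++ (y :: r') := by simp
        have e3 : (r :: rs).reverse.flatten ++ [x] = rs.reverse.flatten ++ (r ++ [x]) := by simp
        rw [e1, e3]
        exact Keq.trans (e2 ▸ step1) step2

lemma foldl_main : ∀ (w : List ℕ) (T : List (List ℕ)), Rows T →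
    (T.map List.headI).IsChain (· < ·) →
    Rows (List.foldl RSInsert T w) ∧
      ((List.foldl RSInsert T w).map List.headI).IsChain (· < ·) ∧
      Keq (readT (List.foldl RSInsert T w)) (readT T ++ w) := by
  intro w
  induction w with
  | nil => intro T h1 h2; exact ⟨h1, h2, by simpa using Keq.refl _⟩
  | cons x w ih =>
    intro T h1 h2
    obtain ⟨m1, m2, m3, m4, m5⟩ := rsinsert_main x T h1 h2
    obtain ⟨f1, f2, f3⟩ := ih (RSInsert T x) m1 m2
    refine ⟨f1, f2, ?_⟩
    have := Keq.trans f3 (Keq.append_right w m5)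
    simpa using this

lemma ptab_main (w : List ℕ) : Rows (Ptab w) ∧ ((Ptab w).map List.headI).IsChain (· < ·) ∧
    Keq (readT (Ptab w)) w := by
  obtain ⟨h1, h2, h3⟩ := foldl_main w [] (by intro r hr; simp at hr) (by simp)
  exact ⟨h1, h2, by simpa [readT, Ptab] using h3⟩

lemma heads_sublist : ∀ (L : List (List ℕ)), (∀ r ∈ L, r ≠ []) →
    L.map List.headI <+ L.flatten := by
  intro L
  induction L with
  | nil => simp
  | cons r L ih =>
    intro h
    have hr : r ≠ [] := h r (by simp)
    obtain ⟨c, r0, rfl⟩ : ∃ c r0, r = c :: r0 := by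
      cases r with
      | nil => exact absurd rfl hr
      | cons c r0 => exact ⟨_, _, rfl⟩
    show c :: L.map List.headI <+ c :: (r0 ++ L.flatten)
    exact List.Sublist.cons₂ c
      ((ih (fun q hq => h q (by simp [hq]))).trans (List.sublist_append_right r0 L.flatten))

lemma flatten_dec_bound : ∀ (L : List (List ℕ)), (∀ r ∈ L, r.Pairwise (· ≤ ·)) →
    ∀ l : List ℕ, l.Pairwise (· > ·) → l <+ L.flatten → l.length ≤ L.length := by
  intro L
  induction L with
  | nil => intro _ l _ hl; simp at hl; simp [hl]
  | cons r L ih =>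
    intro h l hsort hsub
    rw [show (r :: L).flatten = r ++ L.flatten from rfl] at hsub
    obtain ⟨l1, l2, rfl, h1, h2⟩ := List.sublist_append_iff.1 hsub
    have hl2 : l2.Pairwise (· > ·) :=
      (List.pairwise_append.1 hsort).2.1
    have hlen2 : l2.length ≤ L.length := ih (fun q hq => h q (by simp [hq])) l2 hl2 h2
    have hlen1 : l1.length ≤ 1 := by
      match l1, h1 with
      | [], _ => simp
      | [a], _ => simp
      | a :: b :: t, h1 =>
        exfalso
        have hab : a > b := by
          have := (List.pairwise_append.1 hsort).1
          exact List.rel_of_pairwise_cons this (by simp)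
        have hab' : a ≤ b := by
          have hpw : (a :: b :: t).Pairwise (· ≤ ·) :=
            List.Pairwise.sublist h1 (h r (by simp))
          exact List.rel_of_pairwise_cons hpw (by simp)
        omega
    simp only [List.length_append, List.length_cons]
    omega

lemma count_eq (T : List (List ℕ)) (hR : Rows T)
    (hC : (T.map List.headI).IsChain (· < ·)) :
    sSup {t | DecList (readT T) t} = T.length := by
  have hbdd : BddAbove {t | DecList (readT T) t} := by
    refine ⟨(readT T).length, ?_⟩
    rintro t ⟨l, hsub, -, rfl⟩
    exact hsub.length_le
  have hne : {t | DecList (readT T) t}.Nonempty := ⟨0, ⟨[], by simp, by simp, rfl⟩⟩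
  apply _root_.le_antisymm
  · apply csSup_le hne
    rintro t ⟨l, hsub, hsort, rfl⟩
    have := flatten_dec_bound T.reverse
      (fun q hq => (hR q (by simpa using hq)).2) l hsort hsub
    simpa using this
  · apply le_csSup hbdd
    refine ⟨(T.map List.headI).reverse, ?_, ?_, by simp⟩
    · rw [← List.map_reverse]
      exact heads_sublist T.reverse (fun q hq => (hR q (by simpa using hq)).1)
    · show ((T.map List.headI).reverse).Pairwise (· > ·)
      rw [List.pairwise_reverse]
      have : IsTrans ℕ (fun a b => b > a) := ⟨fun a b c h1 h2 => gt_trans h2 h1⟩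
      exact List.isChain_iff_pairwise.1 hC



lemma schensted (w : List ℕ) : sSup {t | DecList w t} = (Ptab w).length := by
  obtain ⟨h1, h2, h3⟩ := ptab_main w
  have hsets : {t | DecList w t} = {t | DecList (readT (Ptab w)) t} := by
    ext t
    exact (keq_declist h3 t).symm
  rw [hsets]
  exact count_eq (Ptab w) h1 h2

lemma oneLine_length {n : ℕ} (π : Equiv.Perm (Fin n)) : (oneLine π).length = n := by
  simp [oneLine]

lemma oneLine_getElem {n : ℕ} (π : Equiv.Perm (Fin n)) (j : ℕ) (hj : j < (oneLine π).length) :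
    (oneLine π)[j] = ((π ⟨j, by simpa [oneLine] using hj⟩ : Fin n) : ℕ) := by
  simp [oneLine]

lemma dec_set_eq {n : ℕ} (π : Equiv.Perm (Fin n)) :
    {t | HasDecSubseq π t} = {t | DecList (oneLine π) t} := by
  ext t
  simp only [Set.mem_setOf_eq]
  constructor
  · rintro ⟨p, hp, hq⟩
    have hn : n = (oneLine π).length := (oneLine_length π).symm
    set is : List (Fin (oneLine π).length) :=
      (List.finRange t).map (fun s => Fin.cast hn (p s)) with his
    have hpw : is.Pairwise (· < ·) := by
      rw [his]
      refine List.Pairwise.map _ ?_ (List.pairwise_lt_finRange t)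
      intro a b hab
      exact hp hab
    refine ⟨List.map (fun x => (oneLine π)[x]) is, List.map_getElem_sublist hpw, ?_, ?_⟩
    · rw [his, List.map_map]
      refine List.Pairwise.map _ ?_ (List.pairwise_lt_finRange t)
      intro a b hab
      show (oneLine π)[(Fin.cast hn (p b) : Fin _)] < (oneLine π)[(Fin.cast hn (p a) : Fin _)]
      simp only [Fin.getElem_fin]
      rw [oneLine_getElem, oneLine_getElem]
      have h2 : π (p b) < π (p a) := hq hab
      show ((π (p b) : Fin n) : ℕ) < ((π (p a) : Fin n) : ℕ)
      exact h2
    · simp [his]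
  · rintro ⟨l, hsub, hsort, hlen⟩
    obtain ⟨is, rfl, hpw⟩ := List.sublist_eq_map_getElem hsub
    have hislen : is.length = t := by simpa using hlen
    have hn : (oneLine π).length = n := oneLine_length π
    refine ⟨fun s => Fin.cast hn (is[(s : ℕ)]'(by omega)), ?_, ?_⟩
    · intro s s' hss'
      have := List.pairwise_iff_getElem.1 hpw (s : ℕ) (s' : ℕ) (by omega) (by omega) hss'
      exact this
    · intro s s' hss'
      have hval : ∀ (u : Fin t) (hu : (u : ℕ) < is.length),
          ((π (Fin.cast hn (is[(u : ℕ)]'hu))) : ℕ)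
            = (List.map (fun x => (oneLine π)[x]) is)[(u : ℕ)]'(by simpa using hu) := by
        intro u hu
        rw [List.getElem_map]
        simp only [Fin.getElem_fin]
        rw [oneLine_getElem]
        rfl
      have hs : (s : ℕ) < is.length := by omega
      have hs' : (s' : ℕ) < is.length := by omega
      have hgt := List.pairwise_iff_getElem.1 hsort (s : ℕ) (s' : ℕ)
        (by simpa using hs) (by simpa using hs') hss'
      show π _ < π _
      rw [Fin.lt_def]
      have e1 := hval s hs
      have e2 := hval s' hs'
      rw [show ((π (Fin.cast hn (is[(s : ℕ)]'hs))) : ℕ) = _ from e1] at *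
      rw [show ((π (Fin.cast hn (is[(s' : ℕ)]'hs'))) : ℕ) = _ from e2] at *
      exact hgt


lemma hasNest_zero {n : ℕ} (π : Equiv.Perm (Fin n)) : HasNesting π 0 :=
  ⟨fun s => s.elim0, fun s => s.elim0, fun s => s.elim0, fun s => s.elim0⟩

/-- For every involution `π ∈ S_n`, the nesting number equals the floor of half
the number of rows of the Robinson–Schensted shape of `π`. -/
theorem nest_eq_half_height (n : ℕ) (π : Equiv.Perm (Fin n))
    (hπ : Function.Involutive ⇑π) :
    nestP π = (Ptab (oneLine π)).length / 2 := by
  have hbddD : BddAbove {t | HasDecSubseq π t} := ⟨n, fun t ht => hasDec_le ht⟩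
  have hbddN : BddAbove {r | HasNesting π r} := ⟨n, fun r hr => hasNest_le hr⟩
  have key : sSup {t | HasDecSubseq π t} = (Ptab (oneLine π)).length := by
    rw [dec_set_eq π]
    exact schensted _
  have hDmem : HasDecSubseq π (sSup {t | HasDecSubseq π t}) :=
    Nat.sSup_mem ⟨0, by exact hasDec_zero π⟩ hbddD
  have hNmem : HasNesting π (nestP π) :=
    Nat.sSup_mem ⟨0, by exact hasNest_zero π⟩ hbddN
  have h1 : 2 * nestP π ≤ sSup {t | HasDecSubseq π t} :=
    le_csSup hbddD (nest_to_dec hπ hNmem)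
  have h2 : sSup {t | HasDecSubseq π t} / 2 ≤ nestP π :=
    le_csSup hbddN (dec_to_nest hπ hDmem)
  rw [← key]
  omega
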